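/- Under the No-Boundary overlay construction, for any s ∈ G_i with s not a boundary vertex, and any boundary vertex t ∈ B with t ∉ G_i, the global shortest distance satisfies d_G(s,t) = min over b_p ∈ B_i of [ d_{G_i}(s, b_p) + d_{G̃}(b_p, t) ]. -/

import Mathlib

open scoped ENNReal Classical

namespace PSP

/-- A weighted undirected graph: symmetric adjacency and a weight function
with values in `ℝ≥0∞` (so weights are non-negative). -/
structure WGraph (V : Type*) where
  Adj : V → V → Prop
  symm : ∀ {u v}, Adj u v → Adj v u
  w : V → V → ℝ≥0∞

variable {V : Type*} {ι : Type*}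

/-- Sum of `f` over consecutive pairs of a list. -/
noncomputable def pairSum (f : V → V → ℝ≥0∞) : List V → ℝ≥0∞
  | a :: b :: rest => f a b + pairSum f (b :: rest)
  | _ => 0

/-- Weighted length of a walk (given as a list of vertices). -/
noncomputable def wlen (G : WGraph V) (l : List V) : ℝ≥0∞ := pairSum G.w l

/-- `l` is a walk in `G` from `s` to `t`: consecutive vertices are adjacent,
the first vertex is `s` and the last is `t`. -/
def IsWalk (G : WGraph V) (s t : V) (l : List V) : Prop :=
  l.Chain' G.Adj ∧ l.head? = some s ∧ l.getLast? = some t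

/-- Shortest-path distance in `G` (`⊤` if no walk exists). -/
noncomputable def dist (G : WGraph V) (s t : V) : ℝ≥0∞ :=
  sInf {x | ∃ l, IsWalk G s t l ∧ wlen G l = x}

/-- Induced subgraph on a vertex set `S`. -/
def induce (G : WGraph V) (S : Set V) : WGraph V where
  Adj u v := G.Adj u v ∧ u ∈ S ∧ v ∈ S
  symm h := ⟨G.symm h.1, h.2.2, h.2.1⟩
  w := G.w

/-- A partition of the vertex set is given by a function `P : V → ι`
assigning each vertex its partition index. The set of all boundary
vertices: vertices having a neighbor in another partition. -/
def bdry (G : WGraph V) (P : V → ι) : Set V :=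
  {v | ∃ u, G.Adj v u ∧ P u ≠ P v}

/-- Boundary vertices of partition `i`. -/
def bdryIn (G : WGraph V) (P : V → ι) (i : ι) : Set V :=
  {v | P v = i ∧ ∃ u, G.Adj v u ∧ P u ≠ i}

/-- The induced subgraph `G_i` of partition `i`. -/
def partGraph (G : WGraph V) (P : V → ι) (i : ι) : WGraph V :=
  induce G {x | P x = i}

/-- The No-Boundary overlay graph `G̃`: vertices are boundary vertices; for each
partition, each boundary pair gets an edge of weight equal to the *local*
partition distance; inter-partition edges of `G` keep their original weight. -/
noncomputable def overlay (G : WGraph V) (P : V → ι) : WGraph V where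
  Adj u v := (P u = P v ∧ u ∈ bdry G P ∧ v ∈ bdry G P) ∨ (P u ≠ P v ∧ G.Adj u v)
  symm := by
    rintro u v (⟨h1, h2, h3⟩ | ⟨h1, h2⟩)
    · exact Or.inl ⟨h1.symm, h3, h2⟩
    · exact Or.inr ⟨fun h => h1 h.symm, G.symm h2⟩
  w u v := if P u = P v then dist (partGraph G P (P u)) u v else G.w u v

/-- A half-connected boundary vertex: has a non-boundary neighbor in its own partition. -/
def halfC (G : WGraph V) (P : V → ι) (b : V) : Prop :=
  b ∈ bdry G P ∧ ∃ u, G.Adj b u ∧ P u = P b ∧ u ∉ bdry G P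

/-- A full-connected boundary vertex: all in-partition neighbors are boundary vertices. -/
def fullC (G : WGraph V) (P : V → ι) (b : V) : Prop :=
  b ∈ bdry G P ∧ ∀ u, G.Adj b u → P u = P b → u ∈ bdry G P

/-- The pruned overlay graph `G̃'`, with inserted boundary-pair weights `ω`:
edges among half-connected boundary pairs of the same partition (weight `ω`),
all inter-partition edges, and the original in-partition adjacent edges of
full-connected boundary vertices. -/
noncomputable def pruned (G : WGraph V) (P : V → ι) (ω : V → V → ℝ≥0∞) : WGraph V where
  Adj u v :=
    (P u = P v ∧ halfC G P u ∧ halfC G P v) ∨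
    (P u ≠ P v ∧ G.Adj u v) ∨
    (P u = P v ∧ G.Adj u v ∧ u ∈ bdry G P ∧ v ∈ bdry G P ∧ (fullC G P u ∨ fullC G P v))
  symm := by
    rintro u v (⟨h1, h2, h3⟩ | ⟨h1, h2⟩ | ⟨h1, h2, h3, h4, h5⟩)
    · exact Or.inl ⟨h1.symm, h3, h2⟩
    · exact Or.inr (Or.inl ⟨fun h => h1 h.symm, G.symm h2⟩)
    · exact Or.inr (Or.inr ⟨h1.symm, G.symm h2, h4, h3, h5.symm⟩)
  w u v := if P u = P v ∧ halfC G P u ∧ halfC G P v then ω u v else G.w u v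

/-- The augmented partition graph `G'_i`: the induced subgraph `G_i` plus, for each
boundary pair `b₁ b₂ ∈ B_i`, an inserted edge of weight `ω b₁ b₂` (taking the
minimum with an already-existing edge weight). -/
noncomputable def augment (G : WGraph V) (P : V → ι) (i : ι) (ω : V → V → ℝ≥0∞) : WGraph V where
  Adj u v := (G.Adj u v ∧ P u = i ∧ P v = i) ∨ (u ∈ bdryIn G P i ∧ v ∈ bdryIn G P i)
  symm := by
    rintro u v (⟨h1, h2, h3⟩ | ⟨h1, h2⟩)
    · exact Or.inl ⟨G.symm h1, h3, h2⟩
    · exact Or.inr ⟨h2, h1⟩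
  w u v :=
    if u ∈ bdryIn G P i ∧ v ∈ bdryIn G P i then
      (if G.Adj u v ∧ P u = i ∧ P v = i then min (ω u v) (G.w u v) else ω u v)
    else G.w u v

/-- Graph obtained from `G` by adding, for every pair `u v ∈ S`, a shortcut edge
of weight `dist G u v` (taking the minimum with an already-existing edge weight). -/
noncomputable def shortcut (G : WGraph V) (S : Set V) : WGraph V where
  Adj u v := G.Adj u v ∨ (u ∈ S ∧ v ∈ S)
  symm := by
    rintro u v (h | ⟨h1, h2⟩)
    · exact Or.inl (G.symm h)
    · exact Or.inr ⟨h2, h1⟩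
  w u v :=
    if u ∈ S ∧ v ∈ S then
      (if G.Adj u v then min (dist G u v) (G.w u v) else dist G u v)
    else G.w u v

/-- Vertex-splitting construction: each cut vertex `x ∈ X` keeps its neighbors in
group `N x 0`; for `1 ≤ i ≤ l x` a duplicate `(x, i)` is created, connected to the
vertices of `N x i` with the original weights and to `x` by a zero-weight edge. -/
noncomputable def split (G : WGraph V) (X : Set V) (N : V → ℕ → Set V) (l : V → ℕ) :
    WGraph (V ⊕ V × ℕ) where
  Adj a b := match a, b with
    | .inl u, .inl v => G.Adj u v ∧ (u ∈ X → v ∈ N u 0) ∧ (v ∈ X → u ∈ N v 0)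
    | .inl v, .inr (x, i) => x ∈ X ∧ 1 ≤ i ∧ i ≤ l x ∧ ((G.Adj x v ∧ v ∈ N x i) ∨ v = x)
    | .inr (x, i), .inl v => x ∈ X ∧ 1 ≤ i ∧ i ≤ l x ∧ ((G.Adj x v ∧ v ∈ N x i) ∨ v = x)
    | .inr _, .inr _ => False
  symm := by
    rintro (u | ⟨x, i⟩) (v | ⟨y, j⟩) h
    · exact ⟨G.symm h.1, h.2.2, h.2.1⟩
    · exact h
    · exact h
    · exact h.elim
  w a b := match a, b with
    | .inl u, .inl v => G.w u v
    | .inl v, .inr (x, _) => if v = x then 0 else G.w x v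
    | .inr (x, _), .inl v => if v = x then 0 else G.w x v
    | .inr _, .inr _ => 0


lemma dist_le_wlen (G : WGraph V) {s t : V} {l : List V} (h : IsWalk G s t l) :
    dist G s t ≤ wlen G l :=
  sInf_le ⟨l, h, rfl⟩

lemma pairSum_append (f : V → V → ℝ≥0∞) (a : V) :
    ∀ (l1 l2 : List V),
      pairSum f (l1 ++ a :: l2) = pairSum f (l1 ++ [a]) + pairSum f (a :: l2)
  | [], l2 => by simp [pairSum]
  | [x], l2 => by simp [pairSum]
  | x :: y :: l1, l2 => by
      show f x y + pairSum f ((y :: l1) ++ (a :: l2)) =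
        f x y + pairSum f ((y :: l1) ++ [a]) + pairSum f (a :: l2)
      rw [pairSum_append f a (y :: l1) l2, add_assoc]

/-- Concatenation of walks. -/
lemma isWalk_append (G : WGraph V) {s m t : V} {l1 l2 : List V}
    (h1 : IsWalk G s m l1) (h2 : IsWalk G m t l2) :
    IsWalk G s t (l1 ++ l2.tail) ∧ wlen G (l1 ++ l2.tail) = wlen G l1 + wlen G l2 := by
  obtain ⟨c1, hh1, hl1⟩ := h1
  obtain ⟨c2, hh2, hl2⟩ := h2
  obtain ⟨l2', rfl⟩ : ∃ l2', l2 = m :: l2' := by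
    cases l2 with
    | nil => simp at hh2
    | cons a l =>
      simp only [List.head?_cons, Option.some.injEq] at hh2
      exact ⟨l, by rw [hh2]⟩
  obtain ⟨l1', rfl⟩ : ∃ l1', l1 = l1' ++ [m] := by
    cases l1 with
    | nil => simp at hl1
    | cons a l =>
      have hne : a :: l ≠ [] := by simp
      refine ⟨(a :: l).dropLast, ?_⟩
      have := List.dropLast_append_getLast hne
      rw [List.getLast?_eq_getLast hne, Option.some.injEq] at hl1
      rw [hl1] at this
      exact this.symm
  have key : l1' ++ [m] ++ l2' = l1' ++ (m :: l2') := by simp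
  constructor
  · refine ⟨?_, ?_, ?_⟩
    · show List.IsChain G.Adj (l1' ++ [m] ++ l2')
      rw [key, List.isChain_append]
      change List.IsChain G.Adj (l1' ++ [m]) at c1; rw [List.isChain_append] at c1
      refine ⟨c1.1, c2, ?_⟩
      intro x hx y hy
      simp only [List.head?_cons, Option.mem_def, Option.some.injEq] at hy
      subst hy
      exact c1.2.2 x hx m (by simp)
    · simpa using hh1
    · show (l1' ++ [m] ++ l2').getLast? = some t
      rcases l2' with _ | ⟨b, l2''⟩
      · have hmt : m = t := by simpa using hl2
        subst hmt
        simp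
      · rw [key, List.getLast?_append, hl2]
        rfl
  · show wlen G (l1' ++ [m] ++ l2') = _
    simp only [List.tail_cons, wlen]
    rw [key, pairSum_append]

/-- `dist` as an infimum over walks. -/
lemma dist_eq_iInf (G : WGraph V) (s t : V) :
    dist G s t = ⨅ l ∈ {l | IsWalk G s t l}, wlen G l := by
  rw [dist]
  have : {x | ∃ l, IsWalk G s t l ∧ wlen G l = x} = wlen G '' {l | IsWalk G s t l} := by
    ext x; simp [Set.mem_image, and_comm]
  rw [this, sInf_image]

lemma dist_triangle (G : WGraph V) (s m t : V) :
    dist G s t ≤ dist G s m + dist G m t := by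
  rw [dist_eq_iInf G s m, dist_eq_iInf G m t, iInf_subtype', iInf_subtype',
    ENNReal.iInf_add]
  refine le_iInf fun ⟨l1, hl1⟩ => ?_
  rw [ENNReal.add_iInf]
  refine le_iInf fun ⟨l2, hl2⟩ => ?_
  obtain ⟨hw, he⟩ := isWalk_append G hl1 hl2
  exact he ▸ dist_le_wlen G hw

/-- `G` distance is at most the partition distance. -/
lemma dist_le_dist_part (G : WGraph V) (P : V → ι) (i : ι) (s t : V) :
    dist G s t ≤ dist (partGraph G P i) s t := by
  refine le_sInf ?_
  rintro x ⟨l, ⟨hc, hh, hl⟩, rfl⟩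
  refine dist_le_wlen G ⟨hc.imp (fun _ _ h => h.1), hh, hl⟩

lemma bdryIn_subset_bdry (G : WGraph V) (P : V → ι) (i : ι) :
    bdryIn G P i ⊆ bdry G P := by
  rintro v ⟨hv, u, hadj, hu⟩
  exact ⟨u, hadj, hv ▸ hu⟩

/-- Decomposition of a walk leaving partition `i`. -/
lemma walk_decomp (G : WGraph V) (P : V → ι) (i : ι) :
    ∀ (l : List V) (s : V) {t : V}, IsWalk G s t l → P s = i → P t ≠ i →
      ∃ bp pl sl, bp ∈ bdryIn G P i ∧ IsWalk (partGraph G P i) s bp pl ∧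
        IsWalk G bp t sl ∧ wlen G l = wlen G pl + wlen G sl := by
  intro l
  induction l with
  | nil => intro s t h _ _; simp [IsWalk] at h
  | cons a l ih =>
    intro s t h hsi hti
    obtain ⟨hc, hh, hl⟩ := h
    obtain rfl : a = s := by simpa using hh
    cases l with
    | nil =>
      obtain rfl : a = t := by simpa using hl
      exact absurd hsi hti
    | cons b rest =>
      have hadj : G.Adj a b := (List.isChain_cons_cons.mp hc).1
      by_cases hb : P b = i
      · have hwb : IsWalk G b t (b :: rest) :=
          ⟨(List.isChain_cons_cons.mp hc).2, rfl, by simpa using hl⟩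
        obtain ⟨bp, pl, sl, hbp, ⟨pc, ph, pL⟩, hsw, heq⟩ := ih b hwb hb hti
        obtain ⟨pl', rfl⟩ : ∃ pl', pl = b :: pl' := by
          cases pl with
          | nil => simp at ph
          | cons x xs =>
            simp only [List.head?_cons, Option.some.injEq] at ph
            exact ⟨xs, by rw [ph]⟩
        refine ⟨bp, a :: b :: pl', sl, hbp, ⟨?_, rfl, by simpa using pL⟩, hsw, ?_⟩
        · exact List.isChain_cons_cons.mpr ⟨⟨hadj, hsi, hb⟩, pc⟩
        · show G.w a b + wlen G (b :: rest) = (G.w a b + wlen G (b :: pl')) + wlen G sl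
          rw [heq, add_assoc]
      · refine ⟨a, [a], a :: b :: rest, ⟨hsi, b, hadj, hb⟩,
          ⟨List.isChain_singleton a, rfl, rfl⟩, ⟨hc, rfl, hl⟩, ?_⟩
        show wlen G (a :: b :: rest) = wlen G [a] + wlen G (a :: b :: rest)
        simp [wlen, pairSum]

/-- cross-partition query, `s` non-boundary, `t` boundary in another partition. -/
theorem stmt4 {V ι : Type*} (G : WGraph V) (P : V → ι) (i : ι)
    (hconn : ∀ u v : V, dist G u v ≠ ⊤)
    (s t : V) (hs : P s = i) (hsb : s ∉ bdry G P)
    (htB : t ∈ bdry G P) (hti : P t ≠ i)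
    (hov : ∀ b1 ∈ bdry G P, ∀ b2 ∈ bdry G P,
      dist (overlay G P) b1 b2 = dist G b1 b2) :
    dist G s t =
      ⨅ bp ∈ bdryIn G P i,
        dist (partGraph G P i) s bp + dist (overlay G P) bp t := by
  apply le_antisymm
  · refine le_iInf fun bp => le_iInf fun hbp => ?_
    rw [hov bp (bdryIn_subset_bdry G P i hbp) t htB]
    calc dist G s t ≤ dist G s bp + dist G bp t := dist_triangle G s bp t
      _ ≤ dist (partGraph G P i) s bp + dist G bp t :=
        add_le_add (dist_le_dist_part G P i s bp) le_rfl
  · refine le_sInf ?_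
    rintro x ⟨l, hl, rfl⟩
    obtain ⟨bp, pl, sl, hbp, hpl, hsl, heq⟩ := walk_decomp G P i l s hl hs hti
    calc (⨅ bp ∈ bdryIn G P i,
            dist (partGraph G P i) s bp + dist (overlay G P) bp t)
        ≤ dist (partGraph G P i) s bp + dist (overlay G P) bp t := biInf_le _ hbp
      _ ≤ wlen G pl + wlen G sl := by
          rw [hov bp (bdryIn_subset_bdry G P i hbp) t htB]
          exact add_le_add (dist_le_wlen _ hpl) (dist_le_wlen G hsl)
      _ = wlen G l := heq.symm

end PSP
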